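/- If liminf_k |λ_k|/k = ∞, then for every s > 0 and every translation 𝐭, ℋ^s(R_𝐭((λ_k)_k)) = 0; hence dim_H R_𝐭((λ_k)_k) = 0 for all 𝐭. -/

import Mathlib

open Filter Matrix MeasureTheory
open scoped Topology ENNReal
open scoped RealInnerProductSpace

/-- The `i`-th largest singular value of a `d × d` real matrix
(`singVal A 0 = α₁(A) ≥ ... ≥ singVal A (d-1) = α_d(A)`). -/
noncomputable def singVal {d : ℕ} (A : Matrix (Fin d) (Fin d) ℝ) (i : Fin d) : ℝ :=
  Real.sqrt ((show (Aᵀ * A).IsHermitian by simpa using Matrix.isHermitian_conjTranspose_mul_self A).eigenvalues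
    (Tuple.sort (show (Aᵀ * A).IsHermitian by simpa using Matrix.isHermitian_conjTranspose_mul_self A).eigenvalues i.rev))

/-- The singular value function `φ^s(A)`. -/
noncomputable def svf {d : ℕ} (A : Matrix (Fin d) (Fin d) ℝ) (s : ℝ) : ℝ :=
  if h : ⌊s⌋₊ < d then
    (∏ i ∈ Finset.univ.filter fun i : Fin d => (i : ℕ) < ⌊s⌋₊, singVal A i) *
      singVal A ⟨⌊s⌋₊, h⟩ ^ (s - (⌊s⌋₊ : ℝ))
  else (∏ i, singVal A i) ^ (s / d)

/-- The matrix product `A_𝐢 = A_{i₁} ⋯ A_{i_n}` along a finite word `𝐢`. -/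
noncomputable def wordProd {N d : ℕ} (A : Fin N → Matrix (Fin d) (Fin d) ℝ)
    (w : List (Fin N)) : Matrix (Fin d) (Fin d) ℝ := (w.map A).prod

/-- The inverse lower pressure `α(t) = liminf_k (−1/k) log φ^t(A_{λ_k})`, as an
extended real number. -/
noncomputable def invLowPressure {N d : ℕ} (A : Fin N → Matrix (Fin d) (Fin d) ℝ)
    (lam : ℕ → List (Fin N)) (t : ℝ) : EReal :=
  Filter.atTop.liminf fun k : ℕ =>
    ((-1 / (k : ℝ) * Real.log (svf (wordProd A (lam k)) t) : ℝ) : EReal)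

/-- `liminf_n |λ_n|/n`, as an extended real number. -/
noncomputable def lenLiminf {N : ℕ} (lam : ℕ → List (Fin N)) : EReal :=
  Filter.atTop.liminf fun n : ℕ => ((((lam n).length : ℝ) / n : ℝ) : EReal)

/-- The pressure `P(t) = lim_n (1/n) log Σ_{𝐢 ∈ Σ_n} φ^t(A_𝐢)`
(defined via `liminf`; under the standing assumptions the limit exists). -/
noncomputable def pressureFn {N d : ℕ} (A : Fin N → Matrix (Fin d) (Fin d) ℝ) (t : ℝ) : ℝ :=
  Filter.atTop.liminf fun n : ℕ =>
    (1 / (n : ℝ)) * Real.log (∑ w : Fin n → Fin N, svf (wordProd A (List.ofFn w)) t)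

/-- The square-pressure `P₂(t) = lim_n (−1/n) log Σ_{𝐢 ∈ Σ_n} (φ^t(A_𝐢))²`
(defined via `liminf`; under the standing assumptions the limit exists). -/
noncomputable def sqPressureFn {N d : ℕ} (A : Fin N → Matrix (Fin d) (Fin d) ℝ) (t : ℝ) : ℝ :=
  Filter.atTop.liminf fun n : ℕ =>
    (-1 / (n : ℝ)) * Real.log (∑ w : Fin n → Fin N, (svf (wordProd A (List.ofFn w)) t) ^ 2)

/-- The natural projection `π_𝐭(𝐢) = Σ_k A_{i₁}⋯A_{i_{k-1}} t_{i_k}` of the affine IFS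
`{x ↦ A_i x + t_i}` on `ℝ^d`. -/
noncomputable def projMap {N d : ℕ} (A : Fin N → Matrix (Fin d) (Fin d) ℝ)
    (tv : Fin N → EuclideanSpace ℝ (Fin d)) (x : ℕ → Fin N) : EuclideanSpace ℝ (Fin d) :=
  ∑' k : ℕ, (WithLp.toLp 2 ((wordProd A (List.ofFn fun j : Fin k => x j)).mulVec (tv (x k))) :
    EuclideanSpace ℝ (Fin d))

/-- The set of times `k` at which `σ^k 𝐢 ∈ [λ_k]`. -/
def targetTimes {N : ℕ} (lam : ℕ → List (Fin N)) (x : ℕ → Fin N) : Set ℕ :=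
  {k | List.ofFn (fun j : Fin (lam k).length => x (k + j)) = lam k}

/-- The shrinking target set
`R_𝐭((λ_k)_k) = π_𝐭 {𝐢 : σ^k 𝐢 ∈ [λ_k] for infinitely many k}`. -/
noncomputable def shrinkTarget {N d : ℕ} (A : Fin N → Matrix (Fin d) (Fin d) ℝ)
    (tv : Fin N → EuclideanSpace ℝ (Fin d)) (lam : ℕ → List (Fin N)) :
    Set (EuclideanSpace ℝ (Fin d)) :=
  projMap A tv '' {x | (targetTimes lam x).Infinite}

lemma singVal_nonneg {d : ℕ} (A : Matrix (Fin d) (Fin d) ℝ) (i : Fin d) :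
    0 ≤ singVal A i := Real.sqrt_nonneg _

lemma norm_mulVec_le {d : ℕ} (hd : 0 < d) (A : Matrix (Fin d) (Fin d) ℝ)
    (v : EuclideanSpace ℝ (Fin d)) :
    ‖(WithLp.equiv 2 (Fin d → ℝ)).symm (A.mulVec v)‖ ≤ singVal A ⟨0, hd⟩ * ‖v‖ := by
  classical
  have hB : (Aᴴ * A).IsHermitian := Matrix.isHermitian_conjTranspose_mul_self A
  set μ := hB.eigenvalues with hμ
  set p := Tuple.sort μ with hp
  have hmono : Monotone (μ ∘ p) := Tuple.monotone_sort μ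
  set m : ℝ := μ (p ((⟨0, hd⟩ : Fin d).rev)) with hm
  have hmax : ∀ i, μ i ≤ m := by
    intro i
    have h1 : p.symm i ≤ (⟨0, hd⟩ : Fin d).rev := by
      rw [Fin.le_def]
      simp [Fin.rev]
      omega
    have := hmono h1
    simpa using this
  have hs : singVal A ⟨0, hd⟩ = Real.sqrt m := rfl
  have hmnn : 0 ≤ m := Matrix.eigenvalues_conjTranspose_mul_self_nonneg A _
  set b := hB.eigenvectorBasis with hb
  set c : Fin d → ℝ := fun i => b.repr v i with hc
  have hv : v = ∑ i, c i • b i := (b.sum_repr v).symm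
  set av : EuclideanSpace ℝ (Fin d) := WithLp.toLp 2 (A.mulVec v) with hav
  set bv : EuclideanSpace ℝ (Fin d) := WithLp.toLp 2 ((Aᴴ * A).mulVec v) with hbv
  have h3 : bv = ∑ i, (c i * μ i) • b i := by
    have e1 : bv = Matrix.toEuclideanLin (Aᴴ * A) v := rfl
    rw [e1]
    conv_lhs => rw [hv]
    rw [map_sum]
    refine Finset.sum_congr rfl fun i _ => ?_
    rw [LinearMap.map_smul]
    have e2 : Matrix.toEuclideanLin (Aᴴ * A) (b i) = μ i • b i := by
      apply (WithLp.equiv 2 (Fin d → ℝ)).injective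
      exact hB.mulVec_eigenvectorBasis i
    rw [e2, smul_smul]
  have hAv2 : ‖av‖ ^ 2 = ∑ i, μ i * c i ^ 2 := by
    rw [← real_inner_self_eq_norm_sq]
    have hdot : ⟪av, av⟫ = ⟪v, bv⟫ := by
      simp only [PiLp.inner_apply, RCLike.inner_apply, conj_trivial]
      show (A.mulVec v) ⬝ᵥ (A.mulVec v) = ((Aᴴ * A).mulVec v) ⬝ᵥ (v : Fin d → ℝ)
      rw [dotProduct_comm ((Aᴴ * A).mulVec v)]
      rw [← Matrix.mulVec_mulVec, Matrix.dotProduct_mulVec v Aᴴ]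
      congr 1
      rw [Matrix.conjTranspose_eq_transpose_of_trivial, Matrix.vecMul_transpose]
    rw [hdot, h3]
    calc ⟪v, ∑ i, (c i * μ i) • b i⟫
        = ⟪∑ i, c i • b i, ∑ i, (c i * μ i) • b i⟫ := by rw [← hv]
      _ = ∑ i, c i * (c i * μ i) := by
          simpa using b.orthonormal.inner_sum c (fun i => c i * μ i) Finset.univ
      _ = ∑ i, μ i * c i ^ 2 := by refine Finset.sum_congr rfl fun i _ => by ring
  have hv2 : ‖v‖ ^ 2 = ∑ i, c i ^ 2 := by
    rw [← real_inner_self_eq_norm_sq]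
    conv_lhs => rw [hv]
    simpa [pow_two] using b.orthonormal.inner_sum c c Finset.univ
  have hle : ‖av‖ ^ 2 ≤ m * ‖v‖ ^ 2 := by
    rw [hAv2, hv2, Finset.mul_sum]
    exact Finset.sum_le_sum fun i _ => mul_le_mul_of_nonneg_right (hmax i) (sq_nonneg _)
  have h := Real.sqrt_le_sqrt hle
  rw [Real.sqrt_sq (norm_nonneg _), Real.sqrt_mul hmnn, Real.sqrt_sq (norm_nonneg _)] at h
  rw [hs]
  show ‖av‖ ≤ _
  exact h

lemma norm_wordProd_mulVec_le {N d : ℕ} (hd : 0 < d)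
    (A : Fin N → Matrix (Fin d) (Fin d) ℝ) {ρ : ℝ} (hρ0 : 0 ≤ ρ)
    (hρ : ∀ i, singVal (A i) ⟨0, hd⟩ ≤ ρ) :
    ∀ (w : List (Fin N)) (v : EuclideanSpace ℝ (Fin d)),
      ‖(WithLp.equiv 2 (Fin d → ℝ)).symm ((wordProd A w).mulVec v)‖ ≤ ρ ^ w.length * ‖v‖ := by
  intro w
  induction w with
  | nil =>
      intro v
      show ‖(WithLp.equiv 2 (Fin d → ℝ)).symm ((1 : Matrix (Fin d) (Fin d) ℝ).mulVec v)‖ ≤ _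
      rw [Matrix.one_mulVec]
      show ‖(WithLp.equiv 2 (Fin d → ℝ)).symm ((WithLp.equiv 2 (Fin d → ℝ)) v)‖ ≤ _
      rw [Equiv.symm_apply_apply]
      simp
  | cons i w ih =>
      intro v
      have h1 : wordProd A (i :: w) = A i * wordProd A w := by
        simp [wordProd]
      rw [h1]
      have h2 : (A i * wordProd A w).mulVec v = (A i).mulVec ((wordProd A w).mulVec v) :=
        (Matrix.mulVec_mulVec _ _ _).symm
      rw [h2]
      calc ‖(WithLp.equiv 2 (Fin d → ℝ)).symm ((A i).mulVec ((wordProd A w).mulVec v))‖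
          ≤ singVal (A i) ⟨0, hd⟩ *
            ‖(WithLp.equiv 2 (Fin d → ℝ)).symm ((wordProd A w).mulVec v)‖ :=
            norm_mulVec_le hd (A i) (WithLp.toLp 2 ((wordProd A w).mulVec v))
        _ ≤ ρ * (ρ ^ w.length * ‖v‖) := by
            apply mul_le_mul (hρ i) (ih v) (norm_nonneg _)
            exact hρ0
        _ = ρ ^ (i :: w).length * ‖v‖ := by
            simp [List.length_cons, pow_succ]
            ring

section Main

variable {N d : ℕ}

/-- The `k`-th term of the series defining `projMap`. -/
noncomputable def pterm (A : Fin N → Matrix (Fin d) (Fin d) ℝ)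
    (tv : Fin N → EuclideanSpace ℝ (Fin d)) (x : ℕ → Fin N) (k : ℕ) :
    EuclideanSpace ℝ (Fin d) :=
  (WithLp.equiv 2 (Fin d → ℝ)).symm
    ((wordProd A (List.ofFn fun j : Fin k => x j)).mulVec (tv (x k)))

lemma projMap_eq_tsum_pterm (A : Fin N → Matrix (Fin d) (Fin d) ℝ)
    (tv : Fin N → EuclideanSpace ℝ (Fin d)) (x : ℕ → Fin N) :
    projMap A tv x = ∑' k, pterm A tv x k := rfl

lemma pterm_norm_le (hd : 0 < d) (A : Fin N → Matrix (Fin d) (Fin d) ℝ)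
    (tv : Fin N → EuclideanSpace ℝ (Fin d)) {ρ T : ℝ} (hρ0 : 0 ≤ ρ)
    (hρ : ∀ i, singVal (A i) ⟨0, hd⟩ ≤ ρ) (hT : ∀ i, ‖tv i‖ ≤ T)
    (x : ℕ → Fin N) (k : ℕ) : ‖pterm A tv x k‖ ≤ T * ρ ^ k := by
  have := norm_wordProd_mulVec_le hd A hρ0 hρ (List.ofFn fun j : Fin k => x j) (tv (x k))
  simp only [List.length_ofFn] at this
  calc ‖pterm A tv x k‖ ≤ ρ ^ k * ‖tv (x k)‖ := this
    _ ≤ ρ ^ k * T := mul_le_mul_of_nonneg_left (hT _) (pow_nonneg hρ0 k)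
    _ = T * ρ ^ k := mul_comm _ _

lemma pterm_summable (hd : 0 < d) (A : Fin N → Matrix (Fin d) (Fin d) ℝ)
    (tv : Fin N → EuclideanSpace ℝ (Fin d)) {ρ T : ℝ} (hρ0 : 0 ≤ ρ) (hρ1 : ρ < 1)
    (hρ : ∀ i, singVal (A i) ⟨0, hd⟩ ≤ ρ) (hT : ∀ i, ‖tv i‖ ≤ T)
    (x : ℕ → Fin N) : Summable (pterm A tv x) :=
  Summable.of_norm_bounded ((summable_geometric_of_lt_one hρ0 hρ1).mul_left T)
    (pterm_norm_le hd A tv hρ0 hρ hT x)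

lemma dist_projMap_le (hd : 0 < d) (A : Fin N → Matrix (Fin d) (Fin d) ℝ)
    (tv : Fin N → EuclideanSpace ℝ (Fin d)) {ρ T : ℝ} (hρ0 : 0 ≤ ρ) (hρ1 : ρ < 1)
    (hρ : ∀ i, singVal (A i) ⟨0, hd⟩ ≤ ρ) (hT : ∀ i, ‖tv i‖ ≤ T)
    (m : ℕ) (x y : ℕ → Fin N) (hxy : ∀ j < m, x j = y j) :
    dist (projMap A tv x) (projMap A tv y) ≤ 2 * (T * ρ ^ m * (1 - ρ)⁻¹) := by
  have hsx := pterm_summable hd A tv hρ0 hρ1 hρ hT x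
  have hsy := pterm_summable hd A tv hρ0 hρ1 hρ hT y
  have htail : ∀ z : ℕ → Fin N, ‖∑' k, pterm A tv z (k + m)‖ ≤ T * ρ ^ m * (1 - ρ)⁻¹ := by
    intro z
    have hg : HasSum (fun k : ℕ => (T * ρ ^ m) * ρ ^ k) ((T * ρ ^ m) * (1 - ρ)⁻¹) :=
      (hasSum_geometric_of_lt_one hρ0 hρ1).mul_left _
    exact tsum_of_norm_bounded hg fun k => by
      calc ‖pterm A tv z (k + m)‖ ≤ T * ρ ^ (k + m) := pterm_norm_le hd A tv hρ0 hρ hT z _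
        _ = (T * ρ ^ m) * ρ ^ k := by rw [pow_add]; ring
  have hhead : ∀ i ∈ Finset.range m, pterm A tv x i = pterm A tv y i := by
    intro i hi
    have him : i < m := Finset.mem_range.1 hi
    have h1 : (List.ofFn fun j : Fin i => x j) = List.ofFn fun j : Fin i => y j := by
      have : (fun j : Fin i => x j) = fun j : Fin i => y j :=
        funext fun j => hxy j (lt_trans j.2 him)
      rw [this]
    have h2 : x i = y i := hxy i him
    unfold pterm
    rw [h1, h2]
  rw [dist_eq_norm, projMap_eq_tsum_pterm, projMap_eq_tsum_pterm,
    ← Summable.sum_add_tsum_nat_add m hsx, ← Summable.sum_add_tsum_nat_add m hsy,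
    Finset.sum_congr rfl hhead, add_sub_add_left_eq_sub]
  calc ‖(∑' k, pterm A tv x (k + m)) - ∑' k, pterm A tv y (k + m)‖
      ≤ ‖∑' k, pterm A tv x (k + m)‖ + ‖∑' k, pterm A tv y (k + m)‖ := norm_sub_le _ _
    _ ≤ 2 * (T * ρ ^ m * (1 - ρ)⁻¹) := by
        have := htail x
        have := htail y
        linarith

end Main

/-- if `|λ_k|/k → ∞`, then `ℋ^s(R_𝐭((λ_k)_k)) = 0` for every `s > 0` and
every translation `𝐭`; hence `dim_H R_𝐭((λ_k)_k) = 0` for all `𝐭`. -/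
theorem stmt_15 {N d : ℕ} (hN : 2 ≤ N) (hd : 0 < d)
    (A : Fin N → Matrix (Fin d) (Fin d) ℝ)
    (hA : ∀ i, IsUnit (A i).det) (hc : ∀ i, singVal (A i) ⟨0, hd⟩ < 1 / 2)
    (lam : ℕ → List (Fin N))
    (hlam : Tendsto (fun n : ℕ => ((lam n).length : ℝ) / n) atTop atTop) :
    ∀ tv : Fin N → EuclideanSpace ℝ (Fin d),
      (∀ s : ℝ, 0 < s → μH[s] (shrinkTarget A tv lam) = 0) ∧
        dimH (shrinkTarget A tv lam) = 0 := by
  intro tv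
  have hNpos : 0 < N := by omega
  have hne : (Finset.univ : Finset (Fin N)).Nonempty := ⟨⟨0, hNpos⟩, Finset.mem_univ _⟩
  set ρ : ℝ := max (Finset.univ.sup' hne fun i => singVal (A i) ⟨0, hd⟩) (1/4) with hρdef
  have hρi : ∀ i, singVal (A i) ⟨0, hd⟩ ≤ ρ := fun i =>
    le_max_of_le_left (Finset.le_sup' (fun i => singVal (A i) ⟨0, hd⟩) (Finset.mem_univ i))
  have hρpos : (0:ℝ) < ρ := lt_of_lt_of_le (by norm_num) (le_max_right _ _)
  have hρ1 : ρ < 1 := by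
    apply max_lt _ (by norm_num)
    refine lt_trans ((Finset.sup'_lt_iff hne).2 fun i _ => hc i) (by norm_num)
  set T : ℝ := Finset.univ.sup' hne fun i => ‖tv i‖ with hTdef
  have hT : ∀ i, ‖tv i‖ ≤ T := fun i => Finset.le_sup' (fun i => ‖tv i‖) (Finset.mem_univ i)
  have hT0 : (0:ℝ) ≤ T := le_trans (norm_nonneg _) (hT ⟨0, hNpos⟩)
  set C : ℝ := (2*T + 2) * (1 - ρ)⁻¹ with hCdef
  have hinv : (0:ℝ) < (1 - ρ)⁻¹ := inv_pos.2 (by linarith)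
  have hC : 0 < C := mul_pos (by linarith) hinv
  have hdist : ∀ (m : ℕ) (x y : ℕ → Fin N), (∀ j < m, x j = y j) →
      dist (projMap A tv x) (projMap A tv y) ≤ C * ρ ^ m := by
    intro m x y hxy
    refine le_trans (dist_projMap_le hd A tv hρpos.le hρ1 hρi hT m x y hxy) ?_
    have h1 : (0:ℝ) ≤ ρ ^ m := pow_nonneg hρpos.le m
    rw [hCdef]
    nlinarith [mul_nonneg h1 hinv.le]
  set L : ℕ → ℕ := fun k => (lam k).length with hLdef
  set Cyl : ∀ _k : ℕ, (Fin _k → Fin N) → Set (ℕ → Fin N) := fun k w =>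
    {x | (∀ j : Fin k, x j = w j) ∧
      List.ofFn (fun j : Fin (lam k).length => x (k + j)) = lam k} with hCyldef
  have hCylDiam : ∀ (k : ℕ) (w : Fin k → Fin N),
      EMetric.diam (projMap A tv '' Cyl k w) ≤ ENNReal.ofReal (C * ρ ^ (k + L k)) := by
    intro k w
    apply EMetric.diam_le
    rintro y1 ⟨x, hx, rfl⟩ y2 ⟨z, hz, rfl⟩
    rw [edist_dist]
    apply ENNReal.ofReal_le_ofReal
    apply hdist
    intro j hj
    by_cases hjk : j < k
    · rw [hx.1 ⟨j, hjk⟩, hz.1 ⟨j, hjk⟩]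
    · push_neg at hjk
      have hfg : (fun i : Fin (lam k).length => x (k + i)) =
          fun i : Fin (lam k).length => z (k + i) :=
        List.ofFn_injective (hx.2.trans hz.2.symm)
      have hjL : j - k < (lam k).length := by
        have : L k = (lam k).length := rfl
        omega
      have h := congrFun hfg ⟨j - k, hjL⟩
      simpa [Nat.add_sub_cancel' hjk] using h
  have key : ∀ s : ℝ, 0 < s → μH[s] (shrinkTarget A tv lam) = 0 := by
    intro s hs
    set q : ℝ := ρ ^ s with hqdef
    have hq0 : 0 < q := Real.rpow_pos_of_pos hρpos s
    have hq1 : q < 1 := Real.rpow_lt_one hρpos.le hρ1 hs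
    have hpow : ∀ m : ℕ, (ρ ^ m) ^ s = q ^ m := by
      intro m
      rw [← Real.rpow_natCast ρ m, ← Real.rpow_mul hρpos.le, mul_comm,
        Real.rpow_mul hρpos.le, Real.rpow_natCast]
    obtain ⟨M, hM⟩ := exists_pow_lt_of_lt_one (show (0:ℝ) < 1/(2*N) by positivity) hq1
    have hNq : (N:ℝ) * q ^ M ≤ 1/2 := by
      have hN' : (0:ℝ) < N := by exact_mod_cast hNpos
      calc (N:ℝ) * q ^ M ≤ N * (1/(2*N)) := by
            apply mul_le_mul_of_nonneg_left hM.le hN'.le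
        _ = 1/2 := by field_simp
    have hev : ∀ᶠ k : ℕ in atTop, M * k ≤ L k := by
      filter_upwards [hlam.eventually_ge_atTop (M:ℝ), eventually_ge_atTop 1] with k h1 h2
      have hk0 : (0:ℝ) < k := by exact_mod_cast h2
      have h3 : (M:ℝ) * k ≤ (lam k).length := by
        rw [← le_div_iff₀ hk0] at *
        exact h1
      exact_mod_cast h3
    obtain ⟨k₂, hk₂⟩ := eventually_atTop.1 hev
    set t : ℕ → (Σ _k : ℕ, (Fin _k → Fin N)) → Set (EuclideanSpace ℝ (Fin d)) :=
      fun b i => if b ≤ i.1 then projMap A tv '' Cyl i.1 i.2 else ∅ with htdef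
    set r : ℕ → ℝ≥0∞ := fun b => ENNReal.ofReal (C * ρ ^ b) with hrdef
    have hr : Tendsto r atTop (𝓝 0) := by
      have h1 : Tendsto (fun b : ℕ => C * ρ ^ b) atTop (𝓝 (0:ℝ)) := by
        simpa using (tendsto_pow_atTop_nhds_zero_of_lt_one hρpos.le hρ1).const_mul C
      have h2 := (ENNReal.continuous_ofReal.tendsto 0).comp h1
      rw [ENNReal.ofReal_zero] at h2
      exact h2
    have ht : ∀ b : ℕ, ∀ i : (Σ _k : ℕ, (Fin _k → Fin N)), EMetric.diam (t b i) ≤ r b := by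
      rintro b ⟨k, w⟩
      by_cases hbk : b ≤ k
      · have htb : t b ⟨k, w⟩ = projMap A tv '' Cyl k w := by
          rw [htdef]; simp only [if_pos hbk]
        rw [htb, hrdef]
        refine le_trans (hCylDiam k w) (ENNReal.ofReal_le_ofReal ?_)
        refine mul_le_mul_of_nonneg_left ?_ hC.le
        exact pow_le_pow_of_le_one hρpos.le hρ1.le (by omega)
      · have htb : t b ⟨k, w⟩ = ∅ := by rw [htdef]; simp only [if_neg hbk]
        simp [htb, EMetric.diam]
    have hst : ∀ b : ℕ, shrinkTarget A tv lam ⊆ ⋃ i, t b i := by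
      intro b y hy
      obtain ⟨x, hx, rfl⟩ := hy
      obtain ⟨k, hk, hbk⟩ := Set.Infinite.exists_gt hx b
      refine Set.mem_iUnion.2 ⟨⟨k, fun j => x j⟩, ?_⟩
      have htb : t b ⟨k, fun j => x j⟩ = projMap A tv '' Cyl k (fun j => x j) := by
        rw [htdef]; simp only [if_pos (le_of_lt hbk)]
      rw [htb]
      exact ⟨x, ⟨fun j => rfl, hk⟩, rfl⟩
    have hbound := MeasureTheory.Measure.hausdorffMeasure_le_liminf_tsum s (shrinkTarget A tv lam) r hr t
      (Eventually.of_forall ht) (Eventually.of_forall hst)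
    set G : ℕ → ℝ≥0∞ :=
      fun k => (N:ℝ≥0∞) ^ k * ENNReal.ofReal (C ^ s * q ^ (k + L k)) with hGdef
    have hGR : ∀ k, G k = ENNReal.ofReal ((N:ℝ) ^ k * (C ^ s * q ^ (k + L k))) := by
      intro k
      rw [hGdef, ENNReal.ofReal_mul (by positivity)]
      congr 1
      rw [ENNReal.ofReal_pow (by positivity), ENNReal.ofReal_natCast]
    have hGsummable : Summable (fun k : ℕ => (N:ℝ) ^ k * (C ^ s * q ^ (k + L k))) := by
      rw [← summable_nat_add_iff k₂]
      have hgeo : Summable (fun n : ℕ => (C ^ s * (1/2:ℝ) ^ k₂) * (1/2:ℝ) ^ n) :=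
        (summable_geometric_of_lt_one (by norm_num) (by norm_num)).mul_left _
      refine Summable.of_nonneg_of_le (fun n => by positivity) (fun n => ?_) hgeo
      set k := n + k₂ with hkdef
      have hkk : k₂ ≤ k := by omega
      have hL : M * k ≤ L k := hk₂ k hkk
      have hq_le : q ^ (k + L k) ≤ (q ^ M) ^ k := by
        calc q ^ (k + L k) ≤ q ^ (M * k) := by
              apply pow_le_pow_of_le_one hq0.le hq1.le
              omega
          _ = (q ^ M) ^ k := by rw [← pow_mul]
      calc (N:ℝ) ^ k * (C ^ s * q ^ (k + L k))
          ≤ (N:ℝ) ^ k * (C ^ s * (q ^ M) ^ k) := by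
            apply mul_le_mul_of_nonneg_left _ (by positivity)
            exact mul_le_mul_of_nonneg_left hq_le (by positivity)
        _ = C ^ s * ((N:ℝ) * q ^ M) ^ k := by rw [mul_pow]; ring
        _ ≤ C ^ s * (1/2:ℝ) ^ k := by
            apply mul_le_mul_of_nonneg_left _ (by positivity)
            exact pow_le_pow_left₀ (by positivity) hNq k
        _ = (C ^ s * (1/2:ℝ) ^ k₂) * (1/2:ℝ) ^ n := by
            rw [hkdef, pow_add]; ring
    have hGfin : (∑' k, G k) ≠ ⊤ := by
      rw [tsum_congr hGR, ← ENNReal.ofReal_tsum_of_nonneg (fun k => by positivity) hGsummable]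
      exact ENNReal.ofReal_ne_top
    have hsum_le : ∀ b : ℕ,
        (∑' i : (Σ _k : ℕ, (Fin _k → Fin N)), EMetric.diam (t b i) ^ s) ≤
          ∑' k, if b ≤ k then G k else 0 := by
      intro b
      rw [ENNReal.tsum_sigma']
      apply ENNReal.tsum_le_tsum
      intro k
      by_cases hbk : b ≤ k
      · rw [if_pos hbk]
        have hterm : ∀ w : Fin k → Fin N, EMetric.diam (t b ⟨k, w⟩) ^ s ≤
            ENNReal.ofReal (C ^ s * q ^ (k + L k)) := by
          intro w
          have htb : t b ⟨k, w⟩ = projMap A tv '' Cyl k w := by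
            rw [htdef]; simp only [if_pos hbk]
          rw [htb]
          calc EMetric.diam (projMap A tv '' Cyl k w) ^ s
              ≤ (ENNReal.ofReal (C * ρ ^ (k + L k))) ^ s :=
                ENNReal.rpow_le_rpow (hCylDiam k w) hs.le
            _ = ENNReal.ofReal ((C * ρ ^ (k + L k)) ^ s) :=
                ENNReal.ofReal_rpow_of_pos (by positivity)
            _ = ENNReal.ofReal (C ^ s * q ^ (k + L k)) := by
                rw [Real.mul_rpow hC.le (by positivity), hpow]
        calc (∑' w : Fin k → Fin N, EMetric.diam (t b ⟨k, w⟩) ^ s)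
            ≤ ∑' _w : Fin k → Fin N, ENNReal.ofReal (C ^ s * q ^ (k + L k)) :=
              ENNReal.tsum_le_tsum hterm
          _ = (Fintype.card (Fin k → Fin N) : ℝ≥0∞) *
              ENNReal.ofReal (C ^ s * q ^ (k + L k)) := by
              rw [tsum_fintype, Finset.sum_const, nsmul_eq_mul, Finset.card_univ]
          _ = G k := by
              rw [hGdef]
              congr 1
              rw [Fintype.card_fun, Fintype.card_fin, Fintype.card_fin]
              push_cast
              rfl
      · rw [if_neg hbk]
        have hz : ∀ w : Fin k → Fin N, EMetric.diam (t b ⟨k, w⟩) ^ s = 0 := by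
          intro w
          have htb : t b ⟨k, w⟩ = ∅ := by rw [htdef]; simp only [if_neg hbk]
          rw [htb]
          simp [EMetric.diam, ENNReal.zero_rpow_of_pos hs]
        simp [hz]
    have htail_eq : ∀ b : ℕ, (∑' k, if b ≤ k then G k else 0) = ∑' j, G (j + b) := by
      intro b
      let e : ℕ ≃ {k : ℕ // b ≤ k} :=
        ⟨fun j => ⟨j + b, Nat.le_add_left b j⟩, fun k => k.1 - b,
          fun j => by simp, fun k => by
            obtain ⟨k, hk⟩ := k
            simp [Nat.sub_add_cancel hk]⟩
      calc (∑' k, if b ≤ k then G k else 0)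
          = ∑' k, Set.indicator {k : ℕ | b ≤ k} G k := by
            refine tsum_congr fun k => ?_
            by_cases hbk : b ≤ k
            · simp [hbk]
            · simp [hbk]
        _ = ∑' (k : {k : ℕ // b ≤ k}), G k := (tsum_subtype _ _).symm
        _ = ∑' j, G (j + b) := by
            rw [← Equiv.tsum_eq e (fun k : {k : ℕ // b ≤ k} => G k)]
            exact tsum_congr fun j => rfl
    have hlim : Tendsto (fun b => ∑' k, if b ≤ k then G k else 0) atTop (𝓝 (0:ℝ≥0∞)) := by
      rw [funext htail_eq]
      exact ENNReal.tendsto_sum_nat_add G hGfin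
    have hlim2 : Tendsto
        (fun b => ∑' i : (Σ _k : ℕ, (Fin _k → Fin N)), EMetric.diam (t b i) ^ s)
        atTop (𝓝 (0:ℝ≥0∞)) :=
      tendsto_of_tendsto_of_tendsto_of_le_of_le tendsto_const_nhds hlim
        (fun b => zero_le) hsum_le
    erw [hlim2.liminf_eq] at hbound
    exact le_zero_iff.1 hbound
  refine ⟨key, ?_⟩
  have hdim : dimH (shrinkTarget A tv lam) ≤ 0 := by
    apply dimH_le
    intro d' hd'
    rcases eq_or_lt_of_le (zero_le (a := d')) with h0 | h0
    · simp [← h0]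
    · exfalso
      have hz := key d' (by exact_mod_cast h0)
      rw [hz] at hd'
      exact ENNReal.zero_ne_top hd'
  exact le_antisymm hdim zero_le
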